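/- The interaction strengths stay uniformly positive along the solution: for all t ≥ 0 one has ψ(x_i(t), x_j(t)) ≥ ψ_0 > 0 for all i, j = 1,…,N, ψ*(y_l(t), y_r(t)) ≥ ψ*_0 > 0 for all l, r = 1,…,M, φ(x_i(t), y_j(t−τ)) ≥ φ_0 > 0 for all i = 1,…,k, j = 1,…,h, and φ*(y_l(t), x_r(t−τ)) ≥ φ*_0 > 0 for all l = 1,…,h, r = 1,…,k, where ψ_0 := min_{|z_1|,|z_2| ≤ C_0} ψ(z_1, z_2), and ψ*_0, φ_0, φ*_0 are defined analogously. -/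

import Mathlib

open Real Set Filter Topology
open scoped BigOperators RealInnerProductSpace

noncomputable section

/-- `Λ` : the maximum of the sup-norms of the four (positive) influence functions. -/
def Lam {d : ℕ} (ψ ψs φ φs : EuclideanSpace ℝ (Fin d) → EuclideanSpace ℝ (Fin d) → ℝ) : ℝ :=
  max
    (max (⨆ p : EuclideanSpace ℝ (Fin d) × EuclideanSpace ℝ (Fin d), ψ p.1 p.2)
         (⨆ p : EuclideanSpace ℝ (Fin d) × EuclideanSpace ℝ (Fin d), ψs p.1 p.2))
    (max (⨆ p : EuclideanSpace ℝ (Fin d) × EuclideanSpace ℝ (Fin d), φ p.1 p.2)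
         (⨆ p : EuclideanSpace ℝ (Fin d) × EuclideanSpace ℝ (Fin d), φs p.1 p.2))

/-- An influence function is admissible when it is continuous, positive and bounded. -/
def Admissible {d : ℕ} (f : EuclideanSpace ℝ (Fin d) → EuclideanSpace ℝ (Fin d) → ℝ) : Prop :=
  Continuous (fun p : EuclideanSpace ℝ (Fin d) × EuclideanSpace ℝ (Fin d) => f p.1 p.2) ∧
    (∀ z₁ z₂, 0 < f z₁ z₂) ∧
    BddAbove (Set.range fun p : EuclideanSpace ℝ (Fin d) × EuclideanSpace ℝ (Fin d) => f p.1 p.2)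

/-- `(x, y)` is a global classical solution of the two-population delayed
Hegselmann–Krause system, with `k` (resp. `h`) leaders in the first (resp. second)
population and time delay `τ`. -/
structure IsSol {d N M : ℕ} (h k : ℕ) (τ : ℝ)
    (ψ ψs φ φs : EuclideanSpace ℝ (Fin d) → EuclideanSpace ℝ (Fin d) → ℝ)
    (x : Fin N → ℝ → EuclideanSpace ℝ (Fin d))
    (y : Fin M → ℝ → EuclideanSpace ℝ (Fin d)) : Prop where
  contx : ∀ i, Continuous (x i)
  conty : ∀ j, Continuous (y j)
  odex_lead : ∀ i : Fin N, (i : ℕ) < k → ∀ t : ℝ, 0 < t →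
    HasDerivAt (x i)
      ((∑ j ∈ Finset.univ.erase i,
          (ψ (x i t) (x j t) / ((N : ℝ) + h - 1)) • (x j t - x i t)) +
        ∑ j ∈ Finset.univ.filter (fun j : Fin M => (j : ℕ) < h),
          (φ (x i t) (y j (t - τ)) / ((N : ℝ) + h - 1)) • (y j (t - τ) - x i t)) t
  odex_foll : ∀ i : Fin N, k ≤ (i : ℕ) → ∀ t : ℝ, 0 < t →
    HasDerivAt (x i)
      (∑ j ∈ Finset.univ.erase i,
          (ψ (x i t) (x j t) / ((N : ℝ) - 1)) • (x j t - x i t)) t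
  odey_lead : ∀ i : Fin M, (i : ℕ) < h → ∀ t : ℝ, 0 < t →
    HasDerivAt (y i)
      ((∑ j ∈ Finset.univ.erase i,
          (ψs (y i t) (y j t) / ((M : ℝ) + k - 1)) • (y j t - y i t)) +
        ∑ j ∈ Finset.univ.filter (fun j : Fin N => (j : ℕ) < k),
          (φs (y i t) (x j (t - τ)) / ((M : ℝ) + k - 1)) • (x j (t - τ) - y i t)) t
  odey_foll : ∀ i : Fin M, h ≤ (i : ℕ) → ∀ t : ℝ, 0 < t →
    HasDerivAt (y i)
      (∑ j ∈ Finset.univ.erase i,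
          (ψs (y i t) (y j t) / ((M : ℝ) - 1)) • (y j t - y i t)) t

/-- `m_0` : the minimum of the projections on `v` of the initial data. -/
def mInit {d N M : ℕ} (h k : ℕ) (τ : ℝ) (v : EuclideanSpace ℝ (Fin d))
    (x : Fin N → ℝ → EuclideanSpace ℝ (Fin d))
    (y : Fin M → ℝ → EuclideanSpace ℝ (Fin d)) : ℝ :=
  min
    (min (⨅ p : {i : Fin N // (i : ℕ) < k} × (Icc (-τ) (0 : ℝ)), ⟪x p.1.1 (p.2 : ℝ), v⟫)
         (⨅ i : {i : Fin N // k ≤ (i : ℕ)}, ⟪x i.1 0, v⟫))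
    (min (⨅ p : {j : Fin M // (j : ℕ) < h} × (Icc (-τ) (0 : ℝ)), ⟪y p.1.1 (p.2 : ℝ), v⟫)
         (⨅ j : {j : Fin M // h ≤ (j : ℕ)}, ⟪y j.1 0, v⟫))

/-- `M_0` : the maximum of the projections on `v` of the initial data. -/
def MInit {d N M : ℕ} (h k : ℕ) (τ : ℝ) (v : EuclideanSpace ℝ (Fin d))
    (x : Fin N → ℝ → EuclideanSpace ℝ (Fin d))
    (y : Fin M → ℝ → EuclideanSpace ℝ (Fin d)) : ℝ :=
  max
    (max (⨆ p : {i : Fin N // (i : ℕ) < k} × (Icc (-τ) (0 : ℝ)), ⟪x p.1.1 (p.2 : ℝ), v⟫)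
         (⨆ i : {i : Fin N // k ≤ (i : ℕ)}, ⟪x i.1 0, v⟫))
    (max (⨆ p : {j : Fin M // (j : ℕ) < h} × (Icc (-τ) (0 : ℝ)), ⟪y p.1.1 (p.2 : ℝ), v⟫)
         (⨆ j : {j : Fin M // h ≤ (j : ℕ)}, ⟪y j.1 0, v⟫))

/-- `C_0` : the maximum of the norms of the initial data. -/
def Cinit {d N M : ℕ} (h k : ℕ) (τ : ℝ)
    (x : Fin N → ℝ → EuclideanSpace ℝ (Fin d))
    (y : Fin M → ℝ → EuclideanSpace ℝ (Fin d)) : ℝ :=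
  max
    (max (⨆ p : {i : Fin N // (i : ℕ) < k} × (Icc (-τ) (0 : ℝ)), ‖x p.1.1 (p.2 : ℝ)‖)
         (⨆ i : {i : Fin N // k ≤ (i : ℕ)}, ‖x i.1 0‖))
    (max (⨆ p : {j : Fin M // (j : ℕ) < h} × (Icc (-τ) (0 : ℝ)), ‖y p.1.1 (p.2 : ℝ)‖)
         (⨆ j : {j : Fin M // h ≤ (j : ℕ)}, ‖y j.1 0‖))

/-- the minimum of an influence function on the ball of radius `C` (in each variable). -/
def minOnBall {d : ℕ} (C : ℝ)
    (f : EuclideanSpace ℝ (Fin d) → EuclideanSpace ℝ (Fin d) → ℝ) : ℝ :=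
  ⨅ p : {z : EuclideanSpace ℝ (Fin d) × EuclideanSpace ℝ (Fin d) // ‖z.1‖ ≤ C ∧ ‖z.2‖ ≤ C},
    f p.1.1 p.1.2

/-- `Γ := min {ψ₀, ψ*₀, φ₀, φ*₀}`. -/
def Gam {d N M : ℕ} (h k : ℕ) (τ : ℝ)
    (ψ ψs φ φs : EuclideanSpace ℝ (Fin d) → EuclideanSpace ℝ (Fin d) → ℝ)
    (x : Fin N → ℝ → EuclideanSpace ℝ (Fin d))
    (y : Fin M → ℝ → EuclideanSpace ℝ (Fin d)) : ℝ :=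
  min (min (minOnBall (Cinit h k τ x y) ψ) (minOnBall (Cinit h k τ x y) ψs))
      (min (minOnBall (Cinit h k τ x y) φ) (minOnBall (Cinit h k τ x y) φs))

/-- `m_n` : minimum of the projections on `v` over the time mesh `I_n = [(6n-1)τ, 6nτ]`. -/
def mSeq {d N M : ℕ} (h k : ℕ) (τ : ℝ) (v : EuclideanSpace ℝ (Fin d))
    (x : Fin N → ℝ → EuclideanSpace ℝ (Fin d))
    (y : Fin M → ℝ → EuclideanSpace ℝ (Fin d)) (n : ℕ) : ℝ :=
  min
    (min (⨅ p : {i : Fin N // (i : ℕ) < k} × (Icc ((6 * (n : ℝ) - 1) * τ) (6 * (n : ℝ) * τ)),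
            ⟪x p.1.1 (p.2 : ℝ), v⟫)
         (⨅ i : {i : Fin N // k ≤ (i : ℕ)}, ⟪x i.1 (6 * (n : ℝ) * τ), v⟫))
    (min (⨅ p : {j : Fin M // (j : ℕ) < h} × (Icc ((6 * (n : ℝ) - 1) * τ) (6 * (n : ℝ) * τ)),
            ⟪y p.1.1 (p.2 : ℝ), v⟫)
         (⨅ j : {j : Fin M // h ≤ (j : ℕ)}, ⟪y j.1 (6 * (n : ℝ) * τ), v⟫))

/-- `M_n` : maximum of the projections on `v` over the time mesh `I_n = [(6n-1)τ, 6nτ]`. -/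
def MSeq {d N M : ℕ} (h k : ℕ) (τ : ℝ) (v : EuclideanSpace ℝ (Fin d))
    (x : Fin N → ℝ → EuclideanSpace ℝ (Fin d))
    (y : Fin M → ℝ → EuclideanSpace ℝ (Fin d)) (n : ℕ) : ℝ :=
  max
    (max (⨆ p : {i : Fin N // (i : ℕ) < k} × (Icc ((6 * (n : ℝ) - 1) * τ) (6 * (n : ℝ) * τ)),
            ⟪x p.1.1 (p.2 : ℝ), v⟫)
         (⨆ i : {i : Fin N // k ≤ (i : ℕ)}, ⟪x i.1 (6 * (n : ℝ) * τ), v⟫))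
    (max (⨆ p : {j : Fin M // (j : ℕ) < h} × (Icc ((6 * (n : ℝ) - 1) * τ) (6 * (n : ℝ) * τ)),
            ⟪y p.1.1 (p.2 : ℝ), v⟫)
         (⨆ j : {j : Fin M // h ≤ (j : ℕ)}, ⟪y j.1 (6 * (n : ℝ) * τ), v⟫))


lemma slope_tendsto_aux (f D : ℝ → ℝ) (a b : ℝ)
    (hf : ContinuousOn f (Icc a b)) (hD : ContinuousOn D (Icc a b))
    (hderiv : ∀ t ∈ Ioo a b, HasDerivAt f (D t) t)
    (x : ℝ) (hx : x ∈ Ico a b) :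
    Tendsto (slope f x) (𝓝[>] x) (𝓝 (D x)) := by
  rw [Metric.tendsto_nhdsWithin_nhds]
  intro ε hε
  have hDx := hD x (Ico_subset_Icc_self hx)
  rw [Metric.continuousWithinAt_iff] at hDx
  obtain ⟨δ, hδ, hδ'⟩ := hDx ε hε
  refine ⟨min δ (b - x), lt_min hδ (sub_pos.2 hx.2), fun z hz hdz => ?_⟩
  have hxz : x < z := hz
  rw [Real.dist_eq] at hdz
  have h1 : z - x < min δ (b - x) := lt_of_le_of_lt (le_abs_self _) hdz
  have hzb : z ≤ b := by
    have := lt_of_lt_of_le h1 (min_le_right _ _); linarith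
  obtain ⟨c, hc, hc'⟩ := exists_hasDerivAt_eq_slope f D hxz
    (hf.mono (Icc_subset_Icc hx.1 hzb))
    (fun t ht => hderiv t ⟨lt_of_le_of_lt hx.1 ht.1, lt_of_lt_of_le ht.2 hzb⟩)
  rw [slope_def_field, ← hc']
  apply hδ'
  · exact ⟨hx.1.trans hc.1.le, hc.2.le.trans hzb⟩
  · rw [Real.dist_eq]
    have h2 : c - x < δ := by
      have := lt_of_lt_of_le h1 (min_le_left _ _); have := hc.2; have := hc.1; linarith
    rw [abs_of_pos (sub_pos.2 hc.1)]
    exact h2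

lemma maxprin {ι : Type*} [Fintype ι] [Nonempty ι] (f D : ι → ℝ → ℝ) (a b C : ℝ)
    (hab : a < b)
    (hcont : ∀ i, ContinuousOn (f i) (Icc a b))
    (hslope : ∀ i, ∀ x ∈ Ico a b, Tendsto (slope (f i) x) (𝓝[>] x) (𝓝 (D i x)))
    (hinit : ∀ i, f i a ≤ C)
    (hcontact : ∀ x ∈ Ico a b, ∀ i, C ≤ f i x → (∀ j, f j x ≤ f i x) → D i x ≤ 0) :
    ∀ x ∈ Icc a b, ∀ i, f i x ≤ C := by
  classical
  set g : ℝ → ℝ := fun t => Finset.univ.sup' Finset.univ_nonempty (fun i => f i t) with hg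
  have hgc : ContinuousOn g (Icc a b) := fun x hx =>
    ContinuousWithinAt.finset_sup'_apply Finset.univ_nonempty (fun i _ => hcont i x hx)
  have hfg : ∀ i t, f i t ≤ g t := by
    intro i t; simp only [hg]; exact Finset.le_sup' (fun j => f j t) (Finset.mem_univ i)
  have hgex : ∀ t, ∃ i, g t = f i t := by
    intro t
    obtain ⟨i, _, hi⟩ := Finset.exists_mem_eq_sup' Finset.univ_nonempty (fun i => f i t)
    exact ⟨i, hi⟩
  have hSne : ∀ t, (Finset.univ.filter fun i => g t ≤ f i t).Nonempty := by
    intro t; obtain ⟨i, hi⟩ := hgex t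
    exact ⟨i, Finset.mem_filter.2 ⟨Finset.mem_univ _, hi.le⟩⟩
  set f' : ℝ → ℝ := fun t =>
    (Finset.univ.filter fun i => g t ≤ f i t).sup' (hSne t) (fun i => D i t) with hf'def
  have main : ∀ δ : ℝ, 0 < δ → ∀ s ∈ Icc a b, g s ≤ C + δ * Real.exp s := by
    intro δ hδ
    have hB : ∀ s : ℝ, HasDerivAt (fun t => C + δ * Real.exp t) (δ * Real.exp s) s :=
      fun s => ((Real.hasDerivAt_exp s).const_mul δ).const_add C
    intro s hs
    refine image_le_of_liminf_slope_right_lt_deriv_boundary (f' := f') hgc ?_ ?_ hB ?_ hs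
    · -- hf' frequently slope
      intro x hx r hr
      by_contra hcon
      rw [Filter.not_frequently] at hcon
      have hev : ∀ᶠ z in 𝓝[>] x, ∃ i, r ≤ (f i z - g x) / (z - x) := by
        filter_upwards [hcon] with z hz
        obtain ⟨i, hi⟩ := hgex z
        refine ⟨i, ?_⟩
        have h2 : r ≤ slope g x z := not_lt.1 hz
        rw [slope_def_field, hi] at h2
        exact h2
      have hfreq : ∃ i, ∃ᶠ z in 𝓝[>] x, r ≤ (f i z - g x) / (z - x) := by
        by_contra hcon2
        push_neg at hcon2
        have h3 : ∀ᶠ z in 𝓝[>] x, ∀ i, ¬ (r ≤ (f i z - g x) / (z - x)) :=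
          eventually_all.2 fun i => (hcon2 i).mono fun z hz => not_le.2 hz
        obtain ⟨z, ⟨i, hi⟩, h4⟩ := (hev.and h3).exists
        exact h4 i hi
      obtain ⟨i, hfi⟩ := hfreq
      set l := 𝓝[>] x ⊓ 𝓟 {z | r ≤ (f i z - g x) / (z - x)} with hl
      haveI hlne : l.NeBot := frequently_iff_neBot.1 hfi
      have hll : l ≤ 𝓝[>] x := inf_le_left
      have hidx : Tendsto (fun z : ℝ => z) l (𝓝 x) :=
        ((tendsto_id'.2 hll).mono_right nhdsWithin_le_nhds)
      have hmemIcc : ∀ᶠ z in l, z ∈ Icc a b := by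
        have : Ioo x b ∈ 𝓝[>] x := Ioo_mem_nhdsGT_of_mem ⟨le_rfl, hx.2⟩
        filter_upwards [hll this] with z hz
        exact ⟨hx.1.trans hz.1.le, hz.2.le⟩
      have hidx' : Tendsto (fun z : ℝ => z) l (𝓝[Icc a b] x) :=
        tendsto_nhdsWithin_of_tendsto_nhds_of_eventually_within _ hidx hmemIcc
      have hfi_tendsto : Tendsto (fun z => f i z) l (𝓝 (f i x)) :=
        ((hcont i x (Ico_subset_Icc_self hx)).tendsto).comp hidx'
      have hrle : ∀ᶠ z in l, r ≤ (f i z - g x) / (z - x) :=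
        eventually_inf_principal.2 (Eventually.of_forall fun z hz => hz)
      have hz_gt : ∀ᶠ z in l, x < z := hll self_mem_nhdsWithin
      have hgix : g x ≤ f i x := by
        have key : ∀ᶠ z in l, g x + r * (z - x) ≤ f i z := by
          filter_upwards [hrle, hz_gt] with z h1 h2
          have hpos : 0 < z - x := sub_pos.2 h2
          have h3 : r * (z - x) ≤ f i z - g x := by
            have := mul_le_mul_of_nonneg_right h1 hpos.le
            rwa [div_mul_cancel₀ _ (ne_of_gt hpos)] at this
          linarith
        have ht : Tendsto (fun z => g x + r * (z - x)) l (𝓝 (g x)) := by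
          have h5 : Tendsto (fun z : ℝ => g x + r * (z - x)) l (𝓝 (g x + r * (x - x))) :=
            (((hidx.sub_const x).const_mul r).const_add (g x))
          simpa using h5
        exact le_of_tendsto_of_tendsto ht hfi_tendsto key
      have hieq : f i x = g x := le_antisymm (hfg i x) hgix
      have hDi : Tendsto (slope (f i) x) l (𝓝 (D i x)) := (hslope i x hx).mono_left hll
      have hslope_ge : ∀ᶠ z in l, r ≤ slope (f i) x z := by
        filter_upwards [hrle] with z h1
        rwa [slope_def_field, hieq]
      have h6 : r ≤ D i x := ge_of_tendsto hDi hslope_ge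
      have h7 : D i x ≤ f' x := by
        simp only [hf'def]
        exact Finset.le_sup' (fun j => D j x) (Finset.mem_filter.2 ⟨Finset.mem_univ _, hgix⟩)
      linarith
    · obtain ⟨i, hi⟩ := hgex a
      have := hinit i
      have := Real.exp_pos a
      nlinarith [this]
    · intro x hx hgx
      rw [hf'def]
      refine Finset.sup'_lt_iff (hSne x) |>.2 fun i hi => ?_
      have hgi : g x ≤ f i x := (Finset.mem_filter.1 hi).2
      have h1 : C ≤ f i x := by
        have := Real.exp_pos x
        nlinarith [hgx ▸ hgi]
      have h2 : ∀ j, f j x ≤ f i x := fun j => (hfg j x).trans hgi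
      have h3 : D i x ≤ 0 := hcontact x hx i h1 h2
      have := Real.exp_pos x
      nlinarith
  intro s hs i
  refine le_of_forall_pos_le_add fun ε hε => ?_
  have h1 := (hfg i s).trans (main (ε / Real.exp s) (by positivity) s hs)
  rwa [div_mul_cancel₀ _ (ne_of_gt (Real.exp_pos s))] at h1


lemma bdd_pair_aux {A : Type*} [Fintype A] (u : A → ℝ → ℝ) (hu : ∀ i, Continuous (u i))
    (a b : ℝ) : BddAbove (Set.range fun p : A × (Icc a b) => u p.1 p.2) := by
  rcases isEmpty_or_nonempty A with hA | hA
  · rw [Set.range_eq_empty (fun p : A × (Icc a b) => u p.1 p.2)]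
    exact bddAbove_empty
  have hex : ∀ i : A, ∃ R, ∀ s ∈ Icc a b, u i s ≤ R := by
    intro i
    obtain ⟨R, hR⟩ := isCompact_Icc.bddAbove_image (hu i).continuousOn
    exact ⟨R, fun s hs => hR (Set.mem_image_of_mem _ hs)⟩
  choose R hR using hex
  refine ⟨Finset.univ.sup' Finset.univ_nonempty R, ?_⟩
  rintro _ ⟨⟨i, s⟩, rfl⟩
  exact (hR i s s.2).trans (Finset.le_sup' R (Finset.mem_univ i))

lemma norm_le_of_proj_aux {E : Type*} [NormedAddCommGroup E] [InnerProductSpace ℝ E]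
    (z : E) (C : ℝ) (hC : 0 ≤ C) (hz : ∀ v : E, ‖v‖ ≤ 1 → ⟪z, v⟫ ≤ C) : ‖z‖ ≤ C := by
  rcases eq_or_ne z 0 with rfl | hz0
  · simpa
  · have hzpos : 0 < ‖z‖ := norm_pos_iff.2 hz0
    have h1 : ‖(‖z‖⁻¹ • z)‖ = 1 := by
      rw [norm_smul, norm_inv, norm_norm, inv_mul_cancel₀ (ne_of_gt hzpos)]
    have h2 := hz _ h1.le
    rw [real_inner_smul_right, real_inner_self_eq_norm_sq] at h2
    calc ‖z‖ = ‖z‖⁻¹ * ‖z‖ ^ 2 := by field_simp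
    _ ≤ C := h2

lemma minOnBall_pos_aux {d : ℕ} (C : ℝ) (hC : 0 ≤ C)
    (f : EuclideanSpace ℝ (Fin d) → EuclideanSpace ℝ (Fin d) → ℝ) (hf : Admissible f) :
    0 < minOnBall C f := by
  set K : Set (EuclideanSpace ℝ (Fin d) × EuclideanSpace ℝ (Fin d)) :=
    {z | ‖z.1‖ ≤ C ∧ ‖z.2‖ ≤ C} with hK
  have hKeq : K = Metric.closedBall 0 C ×ˢ Metric.closedBall 0 C := by
    ext z; simp [hK, Set.mem_prod, mem_closedBall_zero_iff]
  have hKc : IsCompact K := by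
    rw [hKeq]; exact (isCompact_closedBall 0 C).prod (isCompact_closedBall 0 C)
  have hKne : K.Nonempty := ⟨(0, 0), by simp [hK, hC]⟩
  obtain ⟨z₀, hz₀K, hmin⟩ := hKc.exists_isMinOn hKne hf.1.continuousOn
  have : Nonempty {z : EuclideanSpace ℝ (Fin d) × EuclideanSpace ℝ (Fin d) //
      ‖z.1‖ ≤ C ∧ ‖z.2‖ ≤ C} := ⟨⟨(0, 0), by simp [hC]⟩⟩
  have h1 : f z₀.1 z₀.2 ≤ minOnBall C f := le_ciInf fun p => hmin p.2
  exact lt_of_lt_of_le (hf.2.1 _ _) h1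

lemma minOnBall_le_aux {d : ℕ} (C : ℝ)
    (f : EuclideanSpace ℝ (Fin d) → EuclideanSpace ℝ (Fin d) → ℝ) (hf : Admissible f)
    {z1 z2 : EuclideanSpace ℝ (Fin d)} (h1 : ‖z1‖ ≤ C) (h2 : ‖z2‖ ≤ C) :
    minOnBall C f ≤ f z1 z2 := by
  have hbdd : BddBelow (Set.range fun p : {z : EuclideanSpace ℝ (Fin d) ×
      EuclideanSpace ℝ (Fin d) // ‖z.1‖ ≤ C ∧ ‖z.2‖ ≤ C} => f p.1.1 p.1.2) := by
    refine ⟨0, ?_⟩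
    rintro _ ⟨p, rfl⟩
    exact (hf.2.1 _ _).le
  exact ciInf_le hbdd ⟨(z1, z2), ⟨h1, h2⟩⟩

section KeyBound

variable {d N M h k : ℕ} {τ : ℝ}
  {ψ ψs φ φs : EuclideanSpace ℝ (Fin d) → EuclideanSpace ℝ (Fin d) → ℝ}
  {x : Fin N → ℝ → EuclideanSpace ℝ (Fin d)} {y : Fin M → ℝ → EuclideanSpace ℝ (Fin d)}

lemma key_bound (hN : 2 ≤ N) (hM2 : 2 ≤ M)
    (hh1 : 1 ≤ h) (hhM : h < M) (hk1 : 1 ≤ k) (hkN : k < N)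
    (hτ : 0 < τ)
    (hψ : Admissible ψ) (hψs : Admissible ψs) (hφ : Admissible φ) (hφs : Admissible φs)
    (hsol : IsSol h k τ ψ ψs φ φs x y) :
    (0 ≤ Cinit h k τ x y) ∧
    (∀ i : Fin N, (i : ℕ) < k → ∀ s ∈ Icc (-τ) (0:ℝ), ‖x i s‖ ≤ Cinit h k τ x y) ∧
    (∀ j : Fin M, (j : ℕ) < h → ∀ s ∈ Icc (-τ) (0:ℝ), ‖y j s‖ ≤ Cinit h k τ x y) ∧
    (∀ t : ℝ, 0 ≤ t →
      (∀ i, ‖x i t‖ ≤ Cinit h k τ x y) ∧ (∀ j, ‖y j t‖ ≤ Cinit h k τ x y)) := by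
  classical
  set C := Cinit h k τ x y with hCdef
  -- history and initial bounds
  have hC1 : ∀ i : Fin N, (i : ℕ) < k → ∀ s ∈ Icc (-τ) (0:ℝ), ‖x i s‖ ≤ C := by
    intro i hi s hs
    have hb := bdd_pair_aux (fun i : {i : Fin N // (i : ℕ) < k} => fun s => ‖x i.1 s‖)
      (fun i => (hsol.contx i.1).norm) (-τ) 0
    have h1 := le_ciSup hb (⟨⟨i, hi⟩, ⟨s, hs⟩⟩ :
      {i : Fin N // (i : ℕ) < k} × (Icc (-τ) (0:ℝ)))
    exact h1.trans ((le_max_left _ _).trans (le_max_left _ _))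
  have hC2 : ∀ i : Fin N, k ≤ (i : ℕ) → ‖x i 0‖ ≤ C := by
    intro i hi
    have h1 := le_ciSup (Set.Finite.bddAbove (Set.finite_range
      (fun i : {i : Fin N // k ≤ (i : ℕ)} => ‖x i.1 0‖))) (⟨i, hi⟩ : {i : Fin N // k ≤ (i : ℕ)})
    exact h1.trans ((le_max_right _ _).trans (le_max_left _ _))
  have hC3 : ∀ j : Fin M, (j : ℕ) < h → ∀ s ∈ Icc (-τ) (0:ℝ), ‖y j s‖ ≤ C := by
    intro j hj s hs
    have hb := bdd_pair_aux (fun j : {j : Fin M // (j : ℕ) < h} => fun s => ‖y j.1 s‖)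
      (fun j => (hsol.conty j.1).norm) (-τ) 0
    have h1 := le_ciSup hb (⟨⟨j, hj⟩, ⟨s, hs⟩⟩ :
      {j : Fin M // (j : ℕ) < h} × (Icc (-τ) (0:ℝ)))
    exact h1.trans ((le_max_left _ _).trans (le_max_right _ _))
  have hC4 : ∀ j : Fin M, h ≤ (j : ℕ) → ‖y j 0‖ ≤ C := by
    intro j hj
    have h1 := le_ciSup (Set.Finite.bddAbove (Set.finite_range
      (fun j : {j : Fin M // h ≤ (j : ℕ)} => ‖y j.1 0‖))) (⟨j, hj⟩ : {j : Fin M // h ≤ (j : ℕ)})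
    exact h1.trans ((le_max_right _ _).trans (le_max_right _ _))
  have hmem0 : (0:ℝ) ∈ Icc (-τ) (0:ℝ) := ⟨by linarith, le_rfl⟩
  have hC0x : ∀ i : Fin N, ‖x i 0‖ ≤ C := by
    intro i
    rcases lt_or_ge (i : ℕ) k with hi | hi
    · exact hC1 i hi 0 hmem0
    · exact hC2 i hi
  have hC0y : ∀ j : Fin M, ‖y j 0‖ ≤ C := by
    intro j
    rcases lt_or_ge (j : ℕ) h with hj | hj
    · exact hC3 j hj 0 hmem0
    · exact hC4 j hj
  have hNpos : 0 < N := by omega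
  have hMpos : 0 < M := by omega
  have hCpos : (0:ℝ) ≤ C := (norm_nonneg _).trans (hC0x ⟨0, hNpos⟩)
  refine ⟨hCpos, hC1, hC3, ?_⟩
  -- denominators
  have hden1 : (0:ℝ) < (N:ℝ) + h - 1 := by
    have h1 : (2:ℝ) ≤ (N:ℝ) := by exact_mod_cast hN
    have h2 : (0:ℝ) ≤ (h:ℝ) := Nat.cast_nonneg _
    linarith
  have hden2 : (0:ℝ) < (N:ℝ) - 1 := by
    have h1 : (2:ℝ) ≤ (N:ℝ) := by exact_mod_cast hN
    linarith
  have hden3 : (0:ℝ) < (M:ℝ) + k - 1 := by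
    have h1 : (2:ℝ) ≤ (M:ℝ) := by exact_mod_cast hM2
    have h2 : (0:ℝ) ≤ (k:ℝ) := Nat.cast_nonneg _
    linarith
  have hden4 : (0:ℝ) < (M:ℝ) - 1 := by
    have h1 : (2:ℝ) ≤ (M:ℝ) := by exact_mod_cast hM2
    linarith
  haveI : Nonempty (Fin N) := ⟨⟨0, hNpos⟩⟩
  -- projection bound, by induction on the time mesh
  have main : ∀ v : EuclideanSpace ℝ (Fin d), ‖v‖ ≤ 1 → ∀ n : ℕ, ∀ t ∈ Icc (0:ℝ) ((n:ℝ) * τ),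
      (∀ i, ⟪x i t, v⟫ ≤ C) ∧ (∀ j, ⟪y j t, v⟫ ≤ C) := by
    intro v hv
    have hproj : ∀ z : EuclideanSpace ℝ (Fin d), ‖z‖ ≤ C → ⟪z, v⟫ ≤ C := by
      intro z hz
      have h1 := real_inner_le_norm z v
      nlinarith [norm_nonneg z, norm_nonneg v]
    have hhx : ∀ i : Fin N, (i : ℕ) < k → ∀ s ∈ Icc (-τ) (0:ℝ), ⟪x i s, v⟫ ≤ C :=
      fun i hi s hs => hproj _ (hC1 i hi s hs)
    have hhy : ∀ j : Fin M, (j : ℕ) < h → ∀ s ∈ Icc (-τ) (0:ℝ), ⟪y j s, v⟫ ≤ C :=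
      fun j hj s hs => hproj _ (hC3 j hj s hs)
    intro n
    induction n with
    | zero =>
      intro t ht
      simp only [Nat.cast_zero, zero_mul, Icc_self, mem_singleton_iff] at ht
      subst ht
      exact ⟨fun i => hproj _ (hC0x i), fun j => hproj _ (hC0y j)⟩
    | succ n ih =>
      intro t ht
      have hcast : ((n + 1 : ℕ) : ℝ) * τ = (n : ℝ) * τ + τ := by push_cast; ring
      rw [hcast] at ht
      rcases le_or_gt t ((n : ℝ) * τ) with h1 | h1
      · exact ih t ⟨ht.1, h1⟩
      set a := (n : ℝ) * τ with hadef
      set b := (n : ℝ) * τ + τ with hbdef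
      have hapos : (0:ℝ) ≤ a := by positivity
      have hab : a < b := by simp only [hbdef]; linarith
      -- the combined system
      set F : (Fin N ⊕ Fin M) → ℝ → ℝ := fun i s =>
        Sum.elim (fun (i' : Fin N) => (⟪x i' s, v⟫ : ℝ)) (fun (j' : Fin M) => (⟪y j' s, v⟫ : ℝ)) i with hFdef
      set D : (Fin N ⊕ Fin M) → ℝ → ℝ := fun i s =>
        Sum.elim
          (fun (i' : Fin N) => if (i' : ℕ) < k then
              (∑ j ∈ Finset.univ.erase i',
                ψ (x i' s) (x j s) / ((N:ℝ) + h - 1) * (⟪x j s, v⟫ - ⟪x i' s, v⟫))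
              + ∑ j ∈ Finset.univ.filter (fun j : Fin M => (j : ℕ) < h),
                  φ (x i' s) (y j (s - τ)) / ((N:ℝ) + h - 1) * (⟪y j (s - τ), v⟫ - ⟪x i' s, v⟫)
            else ∑ j ∈ Finset.univ.erase i',
                ψ (x i' s) (x j s) / ((N:ℝ) - 1) * (⟪x j s, v⟫ - ⟪x i' s, v⟫))
          (fun (l : Fin M) => if (l : ℕ) < h then
              (∑ j ∈ Finset.univ.erase l,
                ψs (y l s) (y j s) / ((M:ℝ) + k - 1) * (⟪y j s, v⟫ - ⟪y l s, v⟫))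
              + ∑ j ∈ Finset.univ.filter (fun j : Fin N => (j : ℕ) < k),
                  φs (y l s) (x j (s - τ)) / ((M:ℝ) + k - 1) * (⟪x j (s - τ), v⟫ - ⟪y l s, v⟫)
            else ∑ j ∈ Finset.univ.erase l,
                ψs (y l s) (y j s) / ((M:ℝ) - 1) * (⟪y j s, v⟫ - ⟪y l s, v⟫)) i with hDdef
      have hFcont : ∀ i, Continuous (F i) := by
        rintro (i | j)
        · exact (hsol.contx i).inner continuous_const
        · exact (hsol.conty j).inner continuous_const
      have hdelay : ∀ (w : ℝ → EuclideanSpace ℝ (Fin d)), Continuous w → Continuous (fun s => w (s - τ)) :=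
        fun w hw => hw.comp (continuous_id.sub continuous_const)
      have hDcont : ∀ i, Continuous (D i) := by
        rintro (i | l) <;> simp only [hDdef, Sum.elim_inl, Sum.elim_inr] <;> split_ifs
        · exact (continuous_finset_sum _ fun j _ =>
            ((hψ.1.comp ((hsol.contx i).prodMk (hsol.contx j))).div_const _).mul
              (((hsol.contx j).inner continuous_const).sub
                ((hsol.contx i).inner continuous_const))).add
            (continuous_finset_sum _ fun j _ =>
              ((hφ.1.comp ((hsol.contx i).prodMk (hdelay _ (hsol.conty j)))).div_const _).mul
                (((hdelay _ (hsol.conty j)).inner continuous_const).sub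
                  ((hsol.contx i).inner continuous_const)))
        · exact continuous_finset_sum _ fun j _ =>
            ((hψ.1.comp ((hsol.contx i).prodMk (hsol.contx j))).div_const _).mul
              (((hsol.contx j).inner continuous_const).sub
                ((hsol.contx i).inner continuous_const))
        · exact (continuous_finset_sum _ fun j _ =>
            ((hψs.1.comp ((hsol.conty l).prodMk (hsol.conty j))).div_const _).mul
              (((hsol.conty j).inner continuous_const).sub
                ((hsol.conty l).inner continuous_const))).add
            (continuous_finset_sum _ fun j _ =>
              ((hφs.1.comp ((hsol.conty l).prodMk (hdelay _ (hsol.contx j)))).div_const _).mul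
                (((hdelay _ (hsol.contx j)).inner continuous_const).sub
                  ((hsol.conty l).inner continuous_const)))
        · exact continuous_finset_sum _ fun j _ =>
            ((hψs.1.comp ((hsol.conty l).prodMk (hsol.conty j))).div_const _).mul
              (((hsol.conty j).inner continuous_const).sub
                ((hsol.conty l).inner continuous_const))
      have hderiv : ∀ i, ∀ s ∈ Ioo a b, HasDerivAt (F i) (D i s) s := by
        rintro (i | l) s hs
        · have hspos : 0 < s := lt_of_le_of_lt hapos hs.1
          rcases lt_or_ge (i : ℕ) k with hi | hi
          · have hd := hsol.odex_lead i hi s hspos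
            have hd2 := HasDerivAt.inner ℝ hd (hasDerivAt_const s v)
            simp only [hFdef, hDdef, Sum.elim_inl, if_pos hi]
            refine hd2.congr_deriv ?_
            simp only [inner_add_left, sum_inner, real_inner_smul_left, inner_sub_left,
              inner_zero_right, zero_add]
          · have hd := hsol.odex_foll i hi s hspos
            have hd2 := HasDerivAt.inner ℝ hd (hasDerivAt_const s v)
            simp only [hFdef, hDdef, Sum.elim_inl, if_neg (not_lt.2 hi)]
            refine hd2.congr_deriv ?_
            simp only [inner_add_left, sum_inner, real_inner_smul_left, inner_sub_left,
              inner_zero_right, zero_add]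
        · have hspos : 0 < s := lt_of_le_of_lt hapos hs.1
          rcases lt_or_ge (l : ℕ) h with hl | hl
          · have hd := hsol.odey_lead l hl s hspos
            have hd2 := HasDerivAt.inner ℝ hd (hasDerivAt_const s v)
            simp only [hFdef, hDdef, Sum.elim_inr, if_pos hl]
            refine hd2.congr_deriv ?_
            simp only [inner_add_left, sum_inner, real_inner_smul_left, inner_sub_left,
              inner_zero_right, zero_add]
          · have hd := hsol.odey_foll l hl s hspos
            have hd2 := HasDerivAt.inner ℝ hd (hasDerivAt_const s v)
            simp only [hFdef, hDdef, Sum.elim_inr, if_neg (not_lt.2 hl)]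
            refine hd2.congr_deriv ?_
            simp only [inner_add_left, sum_inner, real_inner_smul_left, inner_sub_left,
              inner_zero_right, zero_add]
      -- delayed values are bounded
      have hdel_y : ∀ s ∈ Ico a b, ∀ j : Fin M, (j : ℕ) < h → ⟪y j (s - τ), v⟫ ≤ C := by
        intro s hs j hj
        rcases le_or_gt (s - τ) 0 with h2 | h2
        · exact hhy j hj _ ⟨by simp only [hadef] at hs; linarith [hs.1], h2⟩
        · refine (ih (s - τ) ⟨h2.le, ?_⟩).2 j
          simp only [hadef, hbdef] at hs ⊢
          linarith [hs.2]
      have hdel_x : ∀ s ∈ Ico a b, ∀ j : Fin N, (j : ℕ) < k → ⟪x j (s - τ), v⟫ ≤ C := by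
        intro s hs j hj
        rcases le_or_gt (s - τ) 0 with h2 | h2
        · exact hhx j hj _ ⟨by simp only [hadef] at hs; linarith [hs.1], h2⟩
        · refine (ih (s - τ) ⟨h2.le, ?_⟩).1 j
          simp only [hadef, hbdef] at hs ⊢
          linarith [hs.2]
      have hmp := maxprin F D a b C hab
        (fun i => (hFcont i).continuousOn)
        (fun i s hs => slope_tendsto_aux (F i) (D i) a b (hFcont i).continuousOn
          (hDcont i).continuousOn (hderiv i) s hs)
        (by
          rintro (i | j)
          · exact (ih a ⟨hapos, le_rfl⟩).1 i
          · exact (ih a ⟨hapos, le_rfl⟩).2 j)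
        (by
          intro s hs i hCi hmax
          rcases i with i | l
          · simp only [hFdef, Sum.elim_inl] at hCi hmax
            rcases lt_or_ge (i : ℕ) k with hi | hi
            · simp only [hDdef, Sum.elim_inl, if_pos hi]
              refine add_nonpos ?_ ?_
              · refine Finset.sum_nonpos fun j _ => ?_
                refine mul_nonpos_iff.2 (Or.inl ⟨div_nonneg (hψ.2.1 _ _).le hden1.le, ?_⟩)
                have := hmax (Sum.inl j)
                simp only [hFdef, Sum.elim_inl] at this
                linarith
              · refine Finset.sum_nonpos fun j hj => ?_
                have hjh : (j : ℕ) < h := (Finset.mem_filter.1 hj).2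
                refine mul_nonpos_iff.2 (Or.inl ⟨div_nonneg (hφ.2.1 _ _).le hden1.le, ?_⟩)
                have := hdel_y s hs j hjh
                linarith
            · simp only [hDdef, Sum.elim_inl, if_neg (not_lt.2 hi)]
              refine Finset.sum_nonpos fun j _ => ?_
              refine mul_nonpos_iff.2 (Or.inl ⟨div_nonneg (hψ.2.1 _ _).le hden2.le, ?_⟩)
              have := hmax (Sum.inl j)
              simp only [hFdef, Sum.elim_inl] at this
              linarith
          · simp only [hFdef, Sum.elim_inr] at hCi hmax
            rcases lt_or_ge (l : ℕ) h with hl | hl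
            · simp only [hDdef, Sum.elim_inr, if_pos hl]
              refine add_nonpos ?_ ?_
              · refine Finset.sum_nonpos fun j _ => ?_
                refine mul_nonpos_iff.2 (Or.inl ⟨div_nonneg (hψs.2.1 _ _).le hden3.le, ?_⟩)
                have := hmax (Sum.inr j)
                simp only [hFdef, Sum.elim_inr] at this
                linarith
              · refine Finset.sum_nonpos fun j hj => ?_
                have hjk : (j : ℕ) < k := (Finset.mem_filter.1 hj).2
                refine mul_nonpos_iff.2 (Or.inl ⟨div_nonneg (hφs.2.1 _ _).le hden3.le, ?_⟩)
                have := hdel_x s hs j hjk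
                linarith
            · simp only [hDdef, Sum.elim_inr, if_neg (not_lt.2 hl)]
              refine Finset.sum_nonpos fun j _ => ?_
              refine mul_nonpos_iff.2 (Or.inl ⟨div_nonneg (hψs.2.1 _ _).le hden4.le, ?_⟩)
              have := hmax (Sum.inr j)
              simp only [hFdef, Sum.elim_inr] at this
              linarith)
      have ht' : t ∈ Icc a b := ⟨h1.le, ht.2⟩
      constructor
      · intro i
        have := hmp t ht' (Sum.inl i)
        simpa [hFdef] using this
      · intro j
        have := hmp t ht' (Sum.inr j)
        simpa [hFdef] using this
  -- conclude norm bounds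
  intro t ht
  obtain ⟨n, hn⟩ := exists_nat_ge (t / τ)
  have htn : t ≤ (n : ℝ) * τ := (div_le_iff₀ hτ).1 hn
  constructor
  · intro i
    refine norm_le_of_proj_aux _ C hCpos fun v hv => ?_
    exact (main v hv n t ⟨ht, htn⟩).1 i
  · intro j
    refine norm_le_of_proj_aux _ C hCpos fun v hv => ?_
    exact (main v hv n t ⟨ht, htn⟩).2 j

end KeyBound

theorem stmt2
    (d N M h k : ℕ) (hd : 1 ≤ d) (hN : 2 ≤ N) (hM2 : 2 ≤ M) (hMN : M ≤ N)
    (hh1 : 1 ≤ h) (hhM : h < M) (hk1 : 1 ≤ k) (hkN : k < N)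
    (τ : ℝ) (hτ : 0 < τ)
    (ψ ψs φ φs : EuclideanSpace ℝ (Fin d) → EuclideanSpace ℝ (Fin d) → ℝ)
    (hψ : Admissible ψ) (hψs : Admissible ψs) (hφ : Admissible φ) (hφs : Admissible φs)
    (x : Fin N → ℝ → EuclideanSpace ℝ (Fin d)) (y : Fin M → ℝ → EuclideanSpace ℝ (Fin d))
    (hsol : IsSol h k τ ψ ψs φ φs x y)
    :
    (0 < minOnBall (Cinit h k τ x y) ψ ∧
      ∀ t : ℝ, 0 ≤ t → ∀ i j : Fin N, minOnBall (Cinit h k τ x y) ψ ≤ ψ (x i t) (x j t)) ∧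
    (0 < minOnBall (Cinit h k τ x y) ψs ∧
      ∀ t : ℝ, 0 ≤ t → ∀ l r : Fin M, minOnBall (Cinit h k τ x y) ψs ≤ ψs (y l t) (y r t)) ∧
    (0 < minOnBall (Cinit h k τ x y) φ ∧
      ∀ t : ℝ, 0 ≤ t → ∀ i : Fin N, (i : ℕ) < k → ∀ j : Fin M, (j : ℕ) < h →
        minOnBall (Cinit h k τ x y) φ ≤ φ (x i t) (y j (t - τ))) ∧
    (0 < minOnBall (Cinit h k τ x y) φs ∧
      ∀ t : ℝ, 0 ≤ t → ∀ l : Fin M, (l : ℕ) < h → ∀ r : Fin N, (r : ℕ) < k →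
        minOnBall (Cinit h k τ x y) φs ≤ φs (y l t) (x r (t - τ))) := by
  obtain ⟨hCpos, hC1, hC3, hbd⟩ := key_bound hN hM2 hh1 hhM hk1 hkN hτ hψ hψs hφ hφs hsol
  refine ⟨⟨minOnBall_pos_aux _ hCpos ψ hψ, ?_⟩, ⟨minOnBall_pos_aux _ hCpos ψs hψs, ?_⟩,
    ⟨minOnBall_pos_aux _ hCpos φ hφ, ?_⟩, ⟨minOnBall_pos_aux _ hCpos φs hφs, ?_⟩⟩
  · intro t ht i j
    exact minOnBall_le_aux _ ψ hψ ((hbd t ht).1 i) ((hbd t ht).1 j)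
  · intro t ht l r
    exact minOnBall_le_aux _ ψs hψs ((hbd t ht).2 l) ((hbd t ht).2 r)
  · intro t ht i hi j hj
    have h2 : ‖y j (t - τ)‖ ≤ Cinit h k τ x y := by
      rcases le_or_gt (t - τ) 0 with h3 | h3
      · exact hC3 j hj _ ⟨by linarith, h3⟩
      · exact (hbd (t - τ) h3.le).2 j
    exact minOnBall_le_aux _ φ hφ ((hbd t ht).1 i) h2
  · intro t ht l hl r hr
    have h2 : ‖x r (t - τ)‖ ≤ Cinit h k τ x y := by
      rcases le_or_gt (t - τ) 0 with h3 | h3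
      · exact hC1 r hr _ ⟨by linarith, h3⟩
      · exact (hbd (t - τ) h3.le).1 r
    exact minOnBall_le_aux _ φs hφs ((hbd t ht).2 l) h2
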